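/- Let d ≥ 3 and 1 ≤ k ≤ ⌈(d−2)/2⌉ be integers and let p be an IDF prime for (d,k). Suppose α, β are rational numbers and n, m ≥ 1 are integers such that f^n_{α,β}(0) = 0 and f^m_{α,β}(1) = 1 (i.e., f_{α,β} is PCF with both critical points 0 and 1 periodic). Then α ≠ 0 with v_p(α) ≥ 0, and β = 0 or v_p(β) ≥ 0; that is, both α and β are p-integral. -/

import Mathlib

open Finset Function

-- Auxiliary lemmas

section Aux
variable {p : ℕ} [Fact p.Prime]

/-- norm of a natural number not divisible by `p` is `1`. -/
lemma aux_norm_natCast_eq_one {a : ℕ} (h : ¬ p ∣ a) : ‖(a : ℚ_[p])‖ = 1 := by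
  have hc : ((a : ℤ) : ℚ_[p]) = (a : ℚ_[p]) := by push_cast; ring
  have h1 : ‖(a : ℚ_[p])‖ ≤ 1 := by rw [← hc]; exact Padic.norm_int_le_one _
  have h2 : ¬ ‖(a : ℚ_[p])‖ < 1 := by
    rw [← hc, Padic.norm_intCast_lt_one_iff]
    exact fun hh => h (Int.natCast_dvd_natCast.mp hh)
  exact le_antisymm h1 (not_lt.mp h2)

lemma aux_norm_natCast (n : ℕ) (hn : n ≠ 0) :
    ‖(n : ℚ_[p])‖ = ((p : ℝ) ^ (padicValNat p n))⁻¹ := by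
  have hpp : p.Prime := Fact.out
  have hfac : p ^ (n.factorization p) * (n / p ^ (n.factorization p)) = n :=
    Nat.ordProj_mul_ordCompl_eq_self n p
  have hu : ¬ p ∣ (n / p ^ (n.factorization p)) := Nat.not_dvd_ordCompl hpp hn
  calc ‖(n : ℚ_[p])‖ = ‖((p ^ (n.factorization p) * (n / p ^ (n.factorization p)) : ℕ) : ℚ_[p])‖ := by
        rw [hfac]
    _ = ‖((p : ℚ_[p]))‖ ^ (n.factorization p) * ‖((n / p ^ (n.factorization p) : ℕ) : ℚ_[p])‖ := by
        push_cast; rw [norm_mul, norm_pow]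
    _ = ((p : ℝ)⁻¹) ^ (n.factorization p) * 1 := by
        rw [Padic.norm_p, aux_norm_natCast_eq_one hu]
    _ = ((p : ℝ) ^ (padicValNat p n))⁻¹ := by
        rw [mul_one, inv_pow, Nat.factorization_def n hpp]

/-- ultrametric: sum with a strictly dominant term. -/
lemma aux_dominant_sum {ι : Type*} [DecidableEq ι] {s : Finset ι} {f : ι → ℚ_[p]} {i₀ : ι} (h₀ : i₀ ∈ s)
    (hdom : ∀ i ∈ s, i ≠ i₀ → ‖f i‖ < ‖f i₀‖) : ‖∑ i ∈ s, f i‖ = ‖f i₀‖ := by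
  rw [← Finset.add_sum_erase s f h₀]
  rcases (s.erase i₀).eq_empty_or_nonempty with he | hne
  · rw [he]; simp
  · have hlt : ‖∑ i ∈ s.erase i₀, f i‖ < ‖f i₀‖ := by
      refine lt_of_le_of_lt (hne.norm_sum_le_sup'_norm f) ?_
      rw [Finset.sup'_lt_iff]
      exact fun i hi => hdom i (Finset.mem_of_mem_erase hi) (Finset.ne_of_mem_erase hi)
    rw [Padic.add_eq_max_of_ne (ne_of_lt hlt).symm, max_eq_left hlt.le]

lemma aux_sum_norm_le {ι : Type*} {s : Finset ι} {f : ι → ℚ_[p]} {c : ℝ} (hc : 0 ≤ c)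
    (h : ∀ i ∈ s, ‖f i‖ ≤ c) : ‖∑ i ∈ s, f i‖ ≤ c :=
  IsUltrametricDist.norm_sum_le_of_forall_le_of_nonneg hc h

end Aux

section Aux2
variable {p : ℕ} [Fact p.Prime]

/-- Exact norm of the Belyi-type sum for `‖z‖ > 1`. -/
lemma aux_bp_norm (d k r e : ℕ) (hrk : r ≤ k) (hkd : k + 2 ≤ d)
    {C : ℕ → ℚ_[p]}
    (hC : ∀ i ∈ Finset.range (k+1), ‖C i‖ = if i = r then 1 else ((p : ℝ) ^ e)⁻¹)
    {z : ℚ_[p]} (hz : 1 < ‖z‖) (hne : ‖z‖ ^ r ≠ (p : ℝ) ^ e) :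
    ‖∑ i ∈ Finset.range (k+1), C i * z ^ (d - i)‖
      = max (‖z‖ ^ (d - r)) (((p : ℝ) ^ e)⁻¹ * ‖z‖ ^ d) := by
  have hp1 : (1 : ℝ) < p := by exact_mod_cast (Fact.out : p.Prime).one_lt
  have hpe1 : (1 : ℝ) ≤ (p : ℝ) ^ e := one_le_pow₀ hp1.le
  have hpe0 : (0 : ℝ) < (p : ℝ) ^ e := lt_of_lt_of_le one_pos hpe1
  have hz0 : (0 : ℝ) < ‖z‖ := lt_trans one_pos hz
  have hrm : r ∈ Finset.range (k+1) := Finset.mem_range.mpr (by omega)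
  have h0m : 0 ∈ Finset.range (k+1) := Finset.mem_range.mpr (by omega)
  rcases lt_or_gt_of_ne hne with hlt | hgt
  · -- dominant term i = r
    have hdom : ∀ i ∈ Finset.range (k+1), i ≠ r →
        ‖C i * z ^ (d - i)‖ < ‖C r * z ^ (d - r)‖ := by
      intro i hi hir
      have hik : i ≤ k := by have := Finset.mem_range.mp hi; omega
      rw [norm_mul, norm_mul, norm_pow, norm_pow, hC i hi, hC r hrm, if_pos rfl, if_neg hir,
        one_mul]
      rcases lt_or_gt_of_ne hir with hlt2 | hgt2
      · -- i < r
        have hsplit : ‖z‖ ^ (d - i) = ‖z‖ ^ (d - r) * ‖z‖ ^ (r - i) := by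
          rw [← pow_add]; congr 1; omega
        rw [hsplit, inv_mul_lt_iff₀ hpe0, mul_comm ((p:ℝ)^e) _]
        refine mul_lt_mul_of_pos_left ?_ (pow_pos hz0 _)
        exact lt_of_le_of_lt (pow_le_pow_right₀ hz.le (by omega)) hlt
      · -- r < i
        have hsplit : ‖z‖ ^ (d - r) = ‖z‖ ^ (d - i) * ‖z‖ ^ (i - r) := by
          rw [← pow_add]; congr 1; omega
        calc ((p : ℝ) ^ e)⁻¹ * ‖z‖ ^ (d - i) ≤ ‖z‖ ^ (d - i) :=
              mul_le_of_le_one_left (pow_pos hz0 _).le (inv_le_one_of_one_le₀ hpe1)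
          _ < ‖z‖ ^ (d - i) * ‖z‖ ^ (i - r) :=
              lt_mul_of_one_lt_right (pow_pos hz0 _) (one_lt_pow₀ hz (by omega))
          _ = ‖z‖ ^ (d - r) := hsplit.symm
    rw [aux_dominant_sum hrm hdom, norm_mul, norm_pow, hC r hrm, if_pos rfl, one_mul]
    have hmax : ((p : ℝ) ^ e)⁻¹ * ‖z‖ ^ d ≤ ‖z‖ ^ (d - r) := by
      have hsplit : ‖z‖ ^ d = ‖z‖ ^ (d - r) * ‖z‖ ^ r := by
        rw [← pow_add]; congr 1; omega
      rw [hsplit, inv_mul_le_iff₀ hpe0, mul_comm ((p:ℝ)^e) _]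
      exact mul_le_mul_of_nonneg_left hlt.le (pow_pos hz0 _).le
    rw [max_eq_left hmax]
  · -- dominant term i = 0 ; note r ≠ 0 here
    have hr0 : r ≠ 0 := by
      intro h; rw [h, pow_zero] at hgt
      exact absurd hgt (not_lt.mpr hpe1)
    have hdom : ∀ i ∈ Finset.range (k+1), i ≠ 0 →
        ‖C i * z ^ (d - i)‖ < ‖C 0 * z ^ (d - 0)‖ := by
      intro i hi hi0
      have hik : i ≤ k := by have := Finset.mem_range.mp hi; omega
      rw [norm_mul, norm_mul, norm_pow, norm_pow, hC i hi, hC 0 h0m, if_neg (Ne.symm hr0),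
        Nat.sub_zero]
      rcases eq_or_ne i r with hir | hir
      · rw [if_pos hir, one_mul, hir]
        have hsplit : ‖z‖ ^ d = ‖z‖ ^ (d - r) * ‖z‖ ^ r := by
          rw [← pow_add]; congr 1; omega
        rw [hsplit, lt_inv_mul_iff₀ hpe0, mul_comm ((p:ℝ)^e) _]
        exact mul_lt_mul_of_pos_left hgt (pow_pos hz0 _)
      · rw [if_neg hir]
        refine mul_lt_mul_of_pos_left ?_ (by positivity)
        exact pow_lt_pow_right₀ hz (by omega)
    rw [aux_dominant_sum h0m hdom, norm_mul, norm_pow, hC 0 h0m, if_neg (Ne.symm hr0),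
      Nat.sub_zero]
    have hmax : ‖z‖ ^ (d - r) ≤ ((p : ℝ) ^ e)⁻¹ * ‖z‖ ^ d := by
      have hsplit : ‖z‖ ^ d = ‖z‖ ^ (d - r) * ‖z‖ ^ r := by
        rw [← pow_add]; congr 1; omega
      rw [hsplit, le_inv_mul_iff₀ hpe0, mul_comm ((p:ℝ)^e) _]
      exact mul_le_mul_of_nonneg_left hgt.le (pow_pos hz0 _).le
    rw [max_eq_right hmax]

end Aux2

section Aux3
variable {p : ℕ} [Fact p.Prime]

/-- Ultrametric Lipschitz-type bound for the Belyi-type sum. -/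
lemma aux_diff_bound (d k : ℕ) {A : ℚ_[p]} {C : ℕ → ℚ_[p]} {a b : ℚ_[p]} {L κ : ℝ}
    (hκ0 : 0 ≤ κ) (hL : 1 ≤ L) (ha : ‖a‖ ≤ L) (hb : ‖b‖ ≤ L)
    (hcoef : ∀ i ∈ Finset.range (k+1), ‖A‖ * ‖C i‖ * L ^ (d - i - 1) ≤ κ) :
    ‖(A * ∑ i ∈ Finset.range (k+1), C i * a ^ (d - i))
      - A * ∑ i ∈ Finset.range (k+1), C i * b ^ (d - i)‖ ≤ κ * ‖a - b‖ := by
  have hL0 : (0:ℝ) ≤ L := le_trans zero_le_one hL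
  have key : (A * ∑ i ∈ Finset.range (k+1), C i * a ^ (d - i))
      - A * ∑ i ∈ Finset.range (k+1), C i * b ^ (d - i)
      = (∑ i ∈ Finset.range (k+1),
          A * (C i * (∑ j ∈ Finset.range (d - i), a ^ j * b ^ (d - i - 1 - j)))) * (a - b) := by
    rw [Finset.sum_mul, ← mul_sub, ← Finset.sum_sub_distrib, Finset.mul_sum]
    refine Finset.sum_congr rfl fun i _ => ?_
    rw [← mul_sub, ← geom_sum₂_mul]; ring
  rw [key, norm_mul]
  refine mul_le_mul_of_nonneg_right ?_ (norm_nonneg _)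
  refine aux_sum_norm_le hκ0 fun i hi => ?_
  rw [norm_mul, norm_mul, ← mul_assoc]
  refine le_trans (mul_le_mul_of_nonneg_left ?_ (by positivity)) (hcoef i hi)
  refine aux_sum_norm_le (by positivity) fun j hj => ?_
  rw [norm_mul, norm_pow, norm_pow]
  have hsplit : L ^ (d - i - 1) = L ^ j * L ^ (d - i - 1 - j) := by
    rw [← pow_add]; congr 1
    have := Finset.mem_range.mp hj; omega
  rw [hsplit]
  exact mul_le_mul (pow_le_pow_left₀ (norm_nonneg _) ha _)
    (pow_le_pow_left₀ (norm_nonneg _) hb _) (by positivity) (by positivity)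

end Aux3


/-- The coefficient `b_i` of `z^(d-i)` in the normalized dynamical Belyi polynomial
`B_{d,k}`. -/
def belyiCoeff (d k i : ℕ) : ℚ :=
  ((-1 : ℚ) ^ (k - i) / ((k - i).factorial * i.factorial)) *
    ∏ j ∈ (Finset.range (k + 1)).erase i, ((d : ℚ) - (j : ℚ))

/-- The normalized dynamical Belyi polynomial `B_{d,k}` as a function on `ℚ`. -/
def belyi (d k : ℕ) (z : ℚ) : ℚ :=
  ∑ i ∈ Finset.range (k + 1), belyiCoeff d k i * z ^ (d - i)

/-- The map `f_{a,c}(z) = a · B_{d,k}(z) + c`. -/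
def belyiMap (d k : ℕ) (a c z : ℚ) : ℚ := a * belyi d k z + c

/-- `p` is an index divisor free (IDF) prime for the pair `(d,k)`:
`p` is a prime with `p > k`, `p ∣ d - r` for some `r ≤ k`, and `r ∤ v_p(d-r)`. -/
def IsIDFPrime (d k p : ℕ) : Prop :=
  p.Prime ∧ k < p ∧ ∃ r ≤ k, p ∣ (d - r) ∧ ¬ (r ∣ padicValNat p (d - r))

/-- A rational number is `p`-integral if it is zero or has nonnegative `p`-adic valuation. -/
def PIntegral (p : ℕ) (x : ℚ) : Prop := x = 0 ∨ 0 ≤ padicValRat p x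

/-- (Proposition: `p`-integrality of PCF parameters.)  If both critical
points `0` and `1` are periodic for `f_{α,β}`, then `α` and `β` are `p`-integral for any
IDF prime `p` for `(d,k)` (and moreover `α ≠ 0`). -/
theorem pcf_params_pIntegral (d k p : ℕ) (hd : 3 ≤ d) (hk1 : 1 ≤ k)
    (hk2 : k ≤ (d - 1) / 2) (hp : IsIDFPrime d k p)
    (α β : ℚ) (n m : ℕ) (hn : 1 ≤ n) (hm : 1 ≤ m)
    (h0 : (belyiMap d k α β)^[n] 0 = 0) (h1 : (belyiMap d k α β)^[m] 1 = 1) :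
    α ≠ 0 ∧ 0 ≤ padicValRat p α ∧ (β = 0 ∨ 0 ≤ padicValRat p β) := by
  obtain ⟨hpp, hkp, r, hrk, hdvd, hnd⟩ := hp
  haveI : Fact p.Prime := ⟨hpp⟩
  -- elementary arithmetic
  have hkd : k + 2 ≤ d := by omega
  have hrd : r + 2 ≤ d := by omega
  have hdr0 : d - r ≠ 0 := by omega
  -- α ≠ 0
  have hαne : α ≠ 0 := by
    rintro rfl
    have hconst : ∀ z, belyiMap d k 0 β z = β := fun z => by simp [belyiMap]
    have key : ∀ (j : ℕ) (z : ℚ), 1 ≤ j → (belyiMap d k 0 β)^[j] z = β := by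
      intro j z hj
      obtain ⟨j', rfl⟩ : ∃ j', j = j' + 1 := ⟨j - 1, by omega⟩
      rw [Function.iterate_succ_apply', hconst]
    rw [key n 0 hn] at h0
    rw [key m 1 hm, h0] at h1
    exact one_ne_zero h1.symm
  refine ⟨hαne, ?_⟩
  -- p-adic setup
  set e := padicValNat p (d - r) with he
  have hp1 : (1 : ℝ) < p := by exact_mod_cast hpp.one_lt
  have hpe1 : (1 : ℝ) ≤ (p : ℝ) ^ e := one_le_pow₀ hp1.le
  have hpe0 : (0 : ℝ) < (p : ℝ) ^ e := lt_of_lt_of_le one_pos hpe1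
  set P : ℝ := ((p : ℝ) ^ e)⁻¹ with hP
  have hP0 : 0 < P := by positivity
  have hPle1 : P ≤ 1 := inv_le_one_of_one_le₀ hpe1
  have he1 : 1 ≤ e := one_le_padicValNat_of_dvd (by omega) hdvd
  have hpe1' : (1 : ℝ) < (p : ℝ) ^ e := one_lt_pow₀ hp1 (by omega)
  have hPlt1 : P < 1 := by rw [hP]; exact inv_lt_one_of_one_lt₀ hpe1'
  -- norms of the linear factors
  have hfac1 : ∀ j : ℕ, j ≤ k → j ≠ r → ‖((d : ℚ_[p]) - (j : ℕ))‖ = 1 := by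
    intro j hjk hjr
    have hjd : j ≤ d := by omega
    have hcast : ((d : ℚ_[p]) - (j : ℕ)) = ((d - j : ℕ) : ℚ_[p]) := by
      rw [Nat.cast_sub hjd]
    rw [hcast]
    refine aux_norm_natCast_eq_one ?_
    intro hpd
    rcases lt_or_gt_of_ne hjr with hlt | hgt
    · have h2 : p ∣ (d - j) - (d - r) := Nat.dvd_sub hpd hdvd
      have h3 : (d - j) - (d - r) = r - j := by omega
      rw [h3] at h2
      have := Nat.le_of_dvd (by omega) h2
      omega
    · have h2 : p ∣ (d - r) - (d - j) := Nat.dvd_sub hdvd hpd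
      have h3 : (d - r) - (d - j) = j - r := by omega
      rw [h3] at h2
      have := Nat.le_of_dvd (by omega) h2
      omega
  have hfacr : ‖((d : ℚ_[p]) - (r : ℕ))‖ = P := by
    have hcast : ((d : ℚ_[p]) - (r : ℕ)) = ((d - r : ℕ) : ℚ_[p]) := by
      rw [Nat.cast_sub (by omega)]
    rw [hcast, aux_norm_natCast (d - r) hdr0, hP, he]
  -- coefficient norms
  set C : ℕ → ℚ_[p] := fun i => ((belyiCoeff d k i : ℚ) : ℚ_[p]) with hCdef
  have hCnorm : ∀ i ∈ Finset.range (k+1), ‖C i‖ = if i = r then 1 else P := by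
    intro i hi
    have hik : i ≤ k := by have := Finset.mem_range.mp hi; omega
    have hexp : C i = ((-1 : ℚ_[p]) ^ (k - i) / ((((k - i).factorial * i.factorial : ℕ)) : ℚ_[p]))
        * ∏ j ∈ (Finset.range (k + 1)).erase i, ((d : ℚ_[p]) - (j : ℕ)) := by
      rw [hCdef]
      simp only [belyiCoeff]
      push_cast
      ring
    have hfactnorm : ‖((((k - i).factorial * i.factorial : ℕ)) : ℚ_[p])‖ = 1 := by
      refine aux_norm_natCast_eq_one ?_
      intro hpd
      rcases (Nat.Prime.dvd_mul hpp).mp hpd with h | h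
      · have := (Nat.Prime.dvd_factorial hpp).mp h; omega
      · have := (Nat.Prime.dvd_factorial hpp).mp h; omega
    rw [hexp, norm_mul, norm_div, norm_pow, norm_neg, norm_one, one_pow, hfactnorm, div_one,
      one_mul, norm_prod]
    by_cases hir : i = r
    · rw [if_pos hir]
      refine Finset.prod_eq_one fun j hj => ?_
      have hjk : j ≤ k := by have := Finset.mem_range.mp (Finset.mem_of_mem_erase hj); omega
      have hjr : j ≠ r := by
        have := Finset.ne_of_mem_erase hj; rw [← hir]; exact this
      exact hfac1 j hjk hjr
    · rw [if_neg hir]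
      have hrmem : r ∈ (Finset.range (k + 1)).erase i :=
        Finset.mem_erase.mpr ⟨fun h => hir h.symm, Finset.mem_range.mpr (by omega)⟩
      rw [Finset.prod_eq_single_of_mem r hrmem ?side]
      · exact hfacr
      case side =>
        intro j hj hjr
        have hjk : j ≤ k := by have := Finset.mem_range.mp (Finset.mem_of_mem_erase hj); omega
        exact hfac1 j hjk hjr
  -- the p-adic dynamical system
  set fp : ℚ_[p] → ℚ_[p] :=
    fun z => (α : ℚ_[p]) * (∑ i ∈ Finset.range (k+1), C i * z ^ (d - i)) + (β : ℚ_[p])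
    with hfpdef
  have hcast : ∀ z : ℚ, ((belyiMap d k α β z : ℚ) : ℚ_[p]) = fp (z : ℚ_[p]) := by
    intro z
    rw [hfpdef]
    simp only [belyiMap, belyi, hCdef]
    push_cast
    ring
  have horb : ∀ (j : ℕ) (z : ℚ), (((belyiMap d k α β)^[j] z : ℚ) : ℚ_[p]) = fp^[j] (z : ℚ_[p]) := by
    intro j
    induction j with
    | zero => intro z; simp
    | succ j ih =>
      intro z
      rw [Function.iterate_succ_apply', Function.iterate_succ_apply', hcast, ih]
  set ρ : ℝ := ‖((α : ℚ) : ℚ_[p])‖ with hρdef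
  set τ : ℝ := ‖((β : ℚ) : ℚ_[p])‖ with hτdef
  have hρ0 : 0 < ρ := by
    rw [hρdef, norm_pos_iff]
    exact fun h => hαne (by exact_mod_cast h)
  have hτ0 : 0 ≤ τ := norm_nonneg _
  -- trichotomy exclusion
  have htri : ∀ z : ℚ_[p], 1 < ‖z‖ → ‖z‖ ^ r ≠ (p : ℝ) ^ e := by
    intro z hz heq
    have hz0 : z ≠ 0 := by
      intro h; rw [h, norm_zero] at hz; linarith
    rw [Padic.norm_eq_zpow_neg_valuation hz0] at heq
    rw [← zpow_natCast ((p:ℝ) ^ (-z.valuation)) r, ← zpow_mul,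
      ← zpow_natCast (p:ℝ) e] at heq
    have hinj := zpow_right_injective₀ (a := (p:ℝ)) (by positivity) (ne_of_gt hp1) heq
    have hdvd' : (r : ℤ) ∣ (e : ℤ) := ⟨-z.valuation, by rw [← hinj]; ring⟩
    exact hnd (Int.natCast_dvd_natCast.mp hdvd')
  -- exact norm of the sum
  have hBnorm : ∀ z : ℚ_[p], 1 < ‖z‖ →
      ‖∑ i ∈ Finset.range (k+1), C i * z ^ (d - i)‖
        = max (‖z‖ ^ (d - r)) (P * ‖z‖ ^ d) := by
    intro z hz
    rw [hP]
    exact aux_bp_norm d k r e hrk hkd hCnorm hz (htri z hz)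
  -- one-step norm formula in the escape region
  have hstep : ∀ z : ℚ_[p], 1 < ‖z‖ → τ < ρ * max (‖z‖ ^ (d - r)) (P * ‖z‖ ^ d) →
      ‖fp z‖ = ρ * max (‖z‖ ^ (d - r)) (P * ‖z‖ ^ d) := by
    intro z hz hgt
    have h1 : ‖(α : ℚ_[p]) * (∑ i ∈ Finset.range (k+1), C i * z ^ (d - i))‖
        = ρ * max (‖z‖ ^ (d - r)) (P * ‖z‖ ^ d) := by
      rw [norm_mul, hBnorm z hz, hρdef]
    rw [hfpdef]
    simp only
    rw [Padic.add_eq_max_of_ne (by rw [h1, ← hτdef]; exact (ne_of_gt hgt)), h1, ← hτdef,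
      max_eq_left (by rw [h1] at *; exact hgt.le)]
  have hrm : r ∈ Finset.range (k+1) := Finset.mem_range.mpr (by omega)
  -- uniform Lipschitz-type bound
  have hdm' : ∀ (L' κ' : ℝ), 0 ≤ κ' → 1 ≤ L' → ∀ x y : ℚ_[p], ‖x‖ ≤ L' → ‖y‖ ≤ L' →
      (∀ i ∈ Finset.range (k+1), ρ * ‖C i‖ * L' ^ (d - i - 1) ≤ κ') →
      ‖fp x - fp y‖ ≤ κ' * ‖x - y‖ := by
    intro L' κ' hκ0 hL1 x y hx hy hco
    have hkey : fp x - fp y = ((α : ℚ_[p]) * ∑ i ∈ Finset.range (k+1), C i * x ^ (d - i))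
        - (α : ℚ_[p]) * ∑ i ∈ Finset.range (k+1), C i * y ^ (d - i) := by
      rw [hfpdef]; ring
    rw [hkey]
    refine aux_diff_bound d k hκ0 hL1 hx hy ?_
    intro i hi
    have := hco i hi
    rwa [hρdef] at this
  have hfp0 : fp (0 : ℚ_[p]) = ((β : ℚ) : ℚ_[p]) := by
    rw [hfpdef]
    simp only
    rw [Finset.sum_eq_zero, mul_zero, zero_add]
    intro i hi
    rw [zero_pow (by have := Finset.mem_range.mp hi; omega), mul_zero]
  -- MAIN CASE ANALYSIS I : β is p-integral
  have hβint : τ ≤ 1 := by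
    by_contra hτgt
    push_neg at hτgt
    have hτ1 : 1 ≤ τ := hτgt.le
    have hτpos : 0 < τ := lt_trans one_pos hτgt
    set Mt : ℝ := max (τ ^ (d - r)) (P * τ ^ d) with hMt
    have hMt1 : τ ^ (d - r) ≤ Mt := le_max_left _ _
    have hMt2 : P * τ ^ d ≤ Mt := le_max_right _ _
    rcases le_or_gt (ρ * Mt) τ with hE3 | hE1
    · -- (E3) : contraction of the two critical orbits
      have hcomp1 : ρ * τ ^ (d - r) ≤ τ := le_trans (mul_le_mul_of_nonneg_left hMt1 hρ0.le) hE3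
      have hcomp2 : ρ * (P * τ ^ d) ≤ τ :=
        le_trans (mul_le_mul_of_nonneg_left hMt2 hρ0.le) hE3
      have hρlt1 : ρ < 1 := by
        by_contra hge
        push_neg at hge
        have hpow : τ ^ 2 ≤ τ ^ (d - r) := pow_le_pow_right₀ hτ1 (by omega)
        have hchain : τ ^ 2 ≤ τ := by
          calc τ ^ 2 = 1 * τ ^ 2 := (one_mul _).symm
            _ ≤ ρ * τ ^ (d - r) := mul_le_mul hge hpow (by positivity) hρ0.le
            _ ≤ τ := hcomp1
        nlinarith [hτgt]
      have hcoef1 : ∀ i ∈ Finset.range (k+1), ρ * ‖C i‖ * τ ^ (d - i - 1) ≤ 1 := by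
        intro i hi
        have hik : i ≤ k := by have := Finset.mem_range.mp hi; omega
        rw [hCnorm i hi]
        split_ifs with hir
        · rw [mul_one]
          have h2 : (ρ * τ ^ (d - i - 1)) * τ ≤ 1 * τ := by
            rw [one_mul, mul_assoc, ← pow_succ, show d - i - 1 + 1 = d - r by omega]
            exact hcomp1
          exact le_of_mul_le_mul_right h2 hτpos
        · have h3 : ρ * P * τ ^ (d - 1) ≤ 1 := by
            have h2 : (ρ * P * τ ^ (d - 1)) * τ ≤ 1 * τ := by
              rw [one_mul, mul_assoc (ρ * P), ← pow_succ, show d - 1 + 1 = d by omega]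
              calc ρ * P * τ ^ d = ρ * (P * τ ^ d) := by ring
                _ ≤ τ := hcomp2
            exact le_of_mul_le_mul_right h2 hτpos
          calc ρ * P * τ ^ (d - i - 1) ≤ ρ * P * τ ^ (d - 1) :=
                mul_le_mul_of_nonneg_left (pow_le_pow_right₀ hτ1 (by omega)) (by positivity)
            _ ≤ 1 := h3
      have hcoef2 : ∀ i ∈ Finset.range (k+1), ρ * ‖C i‖ * τ ^ (d - i) ≤ τ := by
        intro i hi
        have hik : i ≤ k := by have := Finset.mem_range.mp hi; omega
        have hsplit : τ ^ (d - i) = τ ^ (d - i - 1) * τ := by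
          rw [← pow_succ]; congr 1; omega
        rw [hsplit, ← mul_assoc]
        calc ρ * ‖C i‖ * τ ^ (d - i - 1) * τ ≤ 1 * τ :=
              mul_le_mul_of_nonneg_right (hcoef1 i hi) hτ0
          _ = τ := one_mul τ
      have hfpbd : ∀ z : ℚ_[p], ‖z‖ ≤ τ → ‖fp z‖ ≤ τ := by
        intro z hz
        rw [hfpdef]
        simp only
        refine le_trans (Padic.nonarchimedean _ _) (max_le ?_ ?_)
        · rw [Finset.mul_sum]
          refine aux_sum_norm_le hτ0 fun i hi => ?_
          rw [norm_mul, norm_mul, norm_pow, ← mul_assoc]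
          calc ‖((α : ℚ) : ℚ_[p])‖ * ‖C i‖ * ‖z‖ ^ (d - i)
              ≤ ρ * ‖C i‖ * τ ^ (d - i) := by
                rw [← hρdef]
                exact mul_le_mul_of_nonneg_left
                  (pow_le_pow_left₀ (norm_nonneg _) hz _) (by positivity)
            _ ≤ τ := hcoef2 i hi
        · rw [← hτdef]
      have hxbd : ∀ j : ℕ, ‖fp^[j] (0 : ℚ_[p])‖ ≤ τ := by
        intro j
        induction j with
        | zero => simpa using hτ0
        | succ j ih => rw [Function.iterate_succ_apply']; exact hfpbd _ ih
      have hybd : ∀ j : ℕ, ‖fp^[j] (1 : ℚ_[p])‖ ≤ τ := by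
        intro j
        induction j with
        | zero => simpa using hτ1
        | succ j ih => rw [Function.iterate_succ_apply']; exact hfpbd _ ih
      have hdm : ∀ x y : ℚ_[p], ‖x‖ ≤ τ → ‖y‖ ≤ τ → ‖fp x - fp y‖ ≤ ‖x - y‖ := by
        intro x y hx hy
        have := hdm' τ 1 zero_le_one hτ1 x y hx hy hcoef1
        simpa using this
      have hdiff1 : ∀ j : ℕ, ‖fp^[j] (0 : ℚ_[p]) - fp^[j] (1 : ℚ_[p])‖ ≤ 1 := by
        intro j
        induction j with
        | zero => simp
        | succ j ih =>
          rw [Function.iterate_succ_apply', Function.iterate_succ_apply']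
          exact le_trans (hdm _ _ (hxbd j) (hybd j)) ih
      have hxn : fp^[n] (0 : ℚ_[p]) = 0 := by
        have hh := (horb n 0).symm
        rw [h0] at hh
        simpa using hh
      have hyn : ‖fp^[n] (1 : ℚ_[p])‖ ≤ 1 := by
        have := hdiff1 n
        rwa [hxn, zero_sub, norm_neg] at this
      have hCle1 : ∀ i ∈ Finset.range (k+1), ‖C i‖ ≤ 1 := by
        intro i hi
        rw [hCnorm i hi]
        split_ifs
        · exact le_refl 1
        · exact hPle1
      have hstrong : ‖fp^[n+1] (0 : ℚ_[p]) - fp^[n+1] (1 : ℚ_[p])‖ ≤ ρ := by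
        rw [Function.iterate_succ_apply', Function.iterate_succ_apply']
        have hb1 : ‖fp^[n] (0 : ℚ_[p])‖ ≤ 1 := by rw [hxn, norm_zero]; exact zero_le_one
        have hco : ∀ i ∈ Finset.range (k+1), ρ * ‖C i‖ * (1:ℝ) ^ (d - i - 1) ≤ ρ := by
          intro i hi
          rw [one_pow, mul_one]
          calc ρ * ‖C i‖ ≤ ρ * 1 := mul_le_mul_of_nonneg_left (hCle1 i hi) hρ0.le
            _ = ρ := mul_one ρ
        calc ‖fp (fp^[n] (0:ℚ_[p])) - fp (fp^[n] (1:ℚ_[p]))‖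
            ≤ ρ * ‖fp^[n] (0:ℚ_[p]) - fp^[n] (1:ℚ_[p])‖ :=
              hdm' 1 ρ hρ0.le le_rfl _ _ hb1 hyn hco
          _ ≤ ρ * 1 := mul_le_mul_of_nonneg_left (hdiff1 n) hρ0.le
          _ = ρ := mul_one ρ
      have htail : ∀ i : ℕ, ‖fp^[n+1+i] (0 : ℚ_[p]) - fp^[n+1+i] (1 : ℚ_[p])‖ ≤ ρ := by
        intro i
        induction i with
        | zero => simpa using hstrong
        | succ i ih =>
          rw [show n+1+(i+1) = (n+1+i)+1 by omega, Function.iterate_succ_apply',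
            Function.iterate_succ_apply']
          exact le_trans (hdm _ _ (hxbd _) (hybd _)) ih
      have hNge : n + 1 ≤ 2 * n * m := by
        calc n + 1 ≤ 2 * n := by omega
          _ = 2 * n * 1 := by ring
          _ ≤ 2 * n * m := Nat.mul_le_mul_left _ hm
      have hx2 : (belyiMap d k α β)^[2*n*m] 0 = 0 := by
        have hiter : ∀ j : ℕ, (belyiMap d k α β)^[n*j] 0 = 0 := by
          intro j
          induction j with
          | zero => simp
          | succ j ih =>
            rw [Nat.mul_succ, Function.iterate_add_apply, h0, ih]
        rw [show 2*n*m = n*(2*m) by ring]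
        exact hiter (2*m)
      have hy2 : (belyiMap d k α β)^[2*n*m] 1 = 1 := by
        have hiter : ∀ j : ℕ, (belyiMap d k α β)^[m*j] 1 = 1 := by
          intro j
          induction j with
          | zero => simp
          | succ j ih =>
            rw [Nat.mul_succ, Function.iterate_add_apply, h1, ih]
        rw [show 2*n*m = m*(2*n) by ring]
        exact hiter (2*n)
      have hx2p : fp^[2*n*m] (0 : ℚ_[p]) = 0 := by
        have hh := (horb (2*n*m) 0).symm
        rw [hx2] at hh
        simpa using hh
      have hy2p : fp^[2*n*m] (1 : ℚ_[p]) = 1 := by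
        have hh := (horb (2*n*m) 1).symm
        rw [hy2] at hh
        simpa using hh
      have hfinal := htail (2*n*m - (n+1))
      rw [show n+1+(2*n*m-(n+1)) = 2*n*m by omega, hx2p, hy2p, zero_sub, norm_neg,
        norm_one] at hfinal
      linarith
    · -- (E1) : escape of the orbit of 0
      have grow : ∀ j : ℕ, τ ≤ ‖fp^[j+1] (0 : ℚ_[p])‖ := by
        intro j
        induction j with
        | zero =>
          rw [zero_add, Function.iterate_one, hfp0, ← hτdef]
        | succ j ih =>
          have hz1 : 1 < ‖fp^[j+1] (0:ℚ_[p])‖ := lt_of_lt_of_le hτgt ih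
          have hmono : Mt ≤ max (‖fp^[j+1] (0:ℚ_[p])‖ ^ (d - r)) (P * ‖fp^[j+1] (0:ℚ_[p])‖ ^ d) := by
            refine max_le_max ?_ ?_
            · exact pow_le_pow_left₀ hτ0 ih _
            · exact mul_le_mul_of_nonneg_left (pow_le_pow_left₀ hτ0 ih _) hP0.le
          have hgt2 : τ < ρ * max (‖fp^[j+1] (0:ℚ_[p])‖ ^ (d - r)) (P * ‖fp^[j+1] (0:ℚ_[p])‖ ^ d) :=
            lt_of_lt_of_le hE1 (mul_le_mul_of_nonneg_left hmono hρ0.le)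
          rw [show j+1+1 = (j+1)+1 by rfl, Function.iterate_succ_apply',
            hstep _ hz1 hgt2]
          exact hgt2.le
      have hxn : fp^[n] (0 : ℚ_[p]) = 0 := by
        have hh := (horb n 0).symm
        rw [h0] at hh
        simpa using hh
      obtain ⟨n', rfl⟩ : ∃ n', n = n' + 1 := ⟨n - 1, by omega⟩
      have := grow n'
      rw [hxn, norm_zero] at this
      linarith
  -- MAIN CASE ANALYSIS II : α is p-integral
  have hαint : ρ ≤ 1 := by
    by_contra hρgt
    push_neg at hρgt
    have hBone : ‖∑ i ∈ Finset.range (k+1), C i * (1:ℚ_[p]) ^ (d - i)‖ = 1 := by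
      have hdom : ∀ i ∈ Finset.range (k+1), i ≠ r →
          ‖C i * (1:ℚ_[p]) ^ (d - i)‖ < ‖C r * (1:ℚ_[p]) ^ (d - r)‖ := by
        intro i hi hir
        rw [one_pow, one_pow, mul_one, mul_one, hCnorm i hi, hCnorm r hrm, if_neg hir,
          if_pos rfl]
        exact hPlt1
      rw [aux_dominant_sum hrm hdom, one_pow, mul_one, hCnorm r hrm, if_pos rfl]
    have hfp1 : ‖fp (1 : ℚ_[p])‖ = ρ := by
      rw [hfpdef]
      simp only
      have hAB : ‖((α : ℚ) : ℚ_[p]) * ∑ i ∈ Finset.range (k+1), C i * (1:ℚ_[p]) ^ (d - i)‖ = ρ := by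
        rw [norm_mul, hBone, mul_one, ← hρdef]
      rw [Padic.add_eq_max_of_ne (by rw [hAB, ← hτdef]; exact ne_of_gt (lt_of_le_of_lt hβint hρgt)),
        hAB, ← hτdef, max_eq_left (le_trans hβint hρgt.le)]
    have grow : ∀ j : ℕ, ρ ≤ ‖fp^[j+1] (1 : ℚ_[p])‖ := by
      intro j
      induction j with
      | zero => rw [zero_add, Function.iterate_one, hfp1]
      | succ j ih =>
        have hz1 : 1 < ‖fp^[j+1] (1:ℚ_[p])‖ := lt_of_lt_of_le hρgt ih
        have hmax1 : (1:ℝ) ≤ max (‖fp^[j+1] (1:ℚ_[p])‖ ^ (d - r)) (P * ‖fp^[j+1] (1:ℚ_[p])‖ ^ d) :=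
          le_trans (one_le_pow₀ hz1.le) (le_max_left _ _)
        have hgt2 : τ < ρ * max (‖fp^[j+1] (1:ℚ_[p])‖ ^ (d - r)) (P * ‖fp^[j+1] (1:ℚ_[p])‖ ^ d) := by
          calc τ ≤ 1 := hβint
            _ < ρ := hρgt
            _ = ρ * 1 := (mul_one ρ).symm
            _ ≤ ρ * max (‖fp^[j+1] (1:ℚ_[p])‖ ^ (d - r)) (P * ‖fp^[j+1] (1:ℚ_[p])‖ ^ d) :=
                mul_le_mul_of_nonneg_left hmax1 hρ0.le
        rw [show j+1+1 = (j+1)+1 by rfl, Function.iterate_succ_apply', hstep _ hz1 hgt2]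
        calc ρ = ρ * 1 := (mul_one ρ).symm
          _ ≤ ρ * max (‖fp^[j+1] (1:ℚ_[p])‖ ^ (d - r)) (P * ‖fp^[j+1] (1:ℚ_[p])‖ ^ d) :=
              mul_le_mul_of_nonneg_left hmax1 hρ0.le
    have h1p : fp^[m] (1 : ℚ_[p]) = 1 := by
      have hh := (horb m 1).symm
      rw [h1] at hh
      simpa using hh
    obtain ⟨m', rfl⟩ : ∃ m', m = m' + 1 := ⟨m - 1, by omega⟩
    have := grow m'
    rw [h1p, norm_one] at this
    linarith
  -- convert the norm bounds back to valuations
  have hconv : ∀ x : ℚ, x ≠ 0 → ‖((x : ℚ) : ℚ_[p])‖ ≤ 1 → 0 ≤ padicValRat p x := by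
    intro x hx hle
    rw [Padic.eq_padicNorm, padicNorm.eq_zpow_of_nonzero hx] at hle
    by_contra hneg
    push_neg at hneg
    have h1 : (1:ℚ) < (p:ℚ) ^ (-padicValRat p x) := by
      refine one_lt_zpow₀ (by exact_mod_cast hp1) (by omega)
    exact absurd hle (not_le.mpr (by exact_mod_cast h1))
  constructor
  · exact hconv α hαne (by rw [← hρdef]; exact hαint)
  · rcases eq_or_ne β 0 with hb | hb
    · exact Or.inl hb
    · exact Or.inr (hconv β hb (by rw [← hτdef]; exact hβint))
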